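/- arXiv:2111.00117 — 3 statements merged into one kernel-verified Lean document; each statement's English description precedes it below -/
import Mathlib

section
/- Let a ∈ ℂ. The Gaussian function z ↦ exp(−(1/2) a z²) is square-integrable against the Gaussian measure e^{−|z|²} d²z/π on ℂ (i.e., belongs to Segal–Bargmann space) if and only if |a| < 1. -/
open MeasureTheory

private lemma gaussian_key (r : ℝ) (hr : 0 ≤ r) :
    Integrable (fun z : ℂ => Real.exp (-(((r : ℂ) * z ^ 2).re) - ‖z‖ ^ 2))
      ↔ r < 1 := by
  have heq : ∀ p : ℝ × ℝ,
      Real.exp (-(((r : ℂ) * ((Complex.measurableEquivRealProd.symm p) ^ 2)).re)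
        - ‖Complex.measurableEquivRealProd.symm p‖ ^ 2)
        = Real.exp (-(1 + r) * p.1 ^ 2) * Real.exp (-(1 - r) * p.2 ^ 2) := by
    intro p
    rw [← Real.exp_add]
    congr 1
    have h1 : (Complex.measurableEquivRealProd.symm p).re = p.1 := rfl
    have h2 : (Complex.measurableEquivRealProd.symm p).im = p.2 := rfl
    rw [Complex.sq_norm, Complex.normSq_apply, h1, h2]
    simp [Complex.mul_re, Complex.mul_im, pow_two, h1, h2]
    ring
  rw [← MeasurePreserving.integrable_comp_emb
      Complex.volume_preserving_equiv_real_prod.symm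
      (MeasurableEquiv.measurableEmbedding _)]
  have hcomp : ((fun z : ℂ => Real.exp (-(((r : ℂ) * z ^ 2).re) - ‖z‖ ^ 2))
      ∘ Complex.measurableEquivRealProd.symm)
      = fun p : ℝ × ℝ => Real.exp (-(1 + r) * p.1 ^ 2) * Real.exp (-(1 - r) * p.2 ^ 2) := by
    funext p; exact heq p
  rw [hcomp]
  constructor
  · intro h
    by_contra hc
    push_neg at hc
    have hae := h.prod_right_ae
    obtain ⟨x, hx⟩ := hae.exists
    have hg : Integrable (fun y : ℝ => Real.exp (-(1 - r) * y ^ 2)) := by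
      have := hx.const_mul (Real.exp (-(1 + r) * x ^ 2))⁻¹
      simpa [← mul_assoc, inv_mul_cancel₀ (Real.exp_ne_zero _)] using this
    rw [integrable_exp_neg_mul_sq_iff] at hg
    linarith
  · intro h
    exact Integrable.mul_prod (integrable_exp_neg_mul_sq (by linarith))
      (integrable_exp_neg_mul_sq (by linarith))

/-- The Gaussian `exp (-(1/2) a z²)` is in Segal–Bargmann space iff `|a| < 1`. -/
theorem gaussian_mem_SB_iff (a : ℂ) :
    Integrable (fun z : ℂ =>
        ‖Complex.exp (-(1 / 2 : ℂ) * a * z ^ 2)‖ ^ 2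
          * Real.exp (-(‖z‖) ^ 2))
      ↔ ‖a‖ < 1 := by
  have hfun : ∀ z : ℂ,
      ‖Complex.exp (-(1 / 2 : ℂ) * a * z ^ 2)‖ ^ 2
          * Real.exp (-(‖z‖) ^ 2)
        = Real.exp (-((a * z ^ 2).re) - ‖z‖ ^ 2) := by
    intro z
    rw [Complex.norm_exp, sq, ← Real.exp_add, ← Real.exp_add]
    congr 1
    have : -(1 / 2 : ℂ) * a * z ^ 2 = -(1 / 2 : ℂ) * (a * z ^ 2) := by ring
    rw [this]
    have : ((-(1 / 2 : ℂ)) * (a * z ^ 2)).re = -(1 / 2) * (a * z ^ 2).re := by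
      simp [Complex.mul_re]
    rw [this]
    ring
  simp only [hfun]
  -- rotate by ω with a * ω² = |a|
  set ω : Circle := Circle.exp (-a.arg / 2) with hω
  have hω2 : a * (ω : ℂ) ^ 2 = (‖a‖ : ℂ) := by
    have h1 : (ω : ℂ) ^ 2 = Complex.exp (-(a.arg : ℂ) * Complex.I) := by
      rw [hω, Circle.coe_exp, sq, ← Complex.exp_add]
      congr 1
      push_cast
      ring
    rw [h1]
    conv_lhs => rw [← Complex.norm_mul_exp_arg_mul_I a]
    rw [mul_assoc, ← Complex.exp_add]
    norm_num
  have hMP := (rotation ω).measurePreserving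
  rw [← hMP.integrable_comp_emb (rotation ω).toHomeomorph.measurableEmbedding]
  have hcomp : ((fun z : ℂ => Real.exp (-((a * z ^ 2).re) - ‖z‖ ^ 2))
      ∘ (rotation ω))
      = fun z : ℂ =>
        Real.exp (-((((‖a‖ : ℝ) : ℂ) * z ^ 2).re) - ‖z‖ ^ 2) := by
    funext z
    simp only [Function.comp_apply, rotation_apply]
    have hz : a * ((ω : ℂ) * z) ^ 2 = ((‖a‖ : ℝ) : ℂ) * z ^ 2 := by
      rw [← hω2]; ring
    rw [hz, norm_mul, Circle.norm_coe, one_mul]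
  rw [hcomp]
  exact gaussian_key ‖a‖ (norm_nonneg a)
end

section
/- Let s ∈ ℝ and a₀, b₀ ∈ ℂ with |a₀| < 1. Then for every t ∈ ℝ one has 1 − i s t (1 − a₀) ≠ 0, and the solution a(t) = (a₀ − i s t (1 − a₀))/(1 − i s t (1 − a₀)) satisfies |a(t)| < 1. -/
/-- The shearing evolution preserves the open unit disk of squeezing parameters. -/
theorem shearing_preserves_unit_disk (s : ℝ) (a₀ b₀ : ℂ) (ha₀ : ‖a₀‖ < 1) :
    ∀ t : ℝ,
      1 - Complex.I * s * t * (1 - a₀) ≠ 0 ∧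
      ‖(a₀ - Complex.I * s * t * (1 - a₀)) / (1 - Complex.I * s * t * (1 - a₀))‖ < 1 := by
  intro t
  have key : Complex.normSq (1 - Complex.I * s * t * (1 - a₀))
      = Complex.normSq (a₀ - Complex.I * s * t * (1 - a₀)) + 1 - Complex.normSq a₀ := by
    simp only [Complex.normSq_apply, Complex.sub_re, Complex.sub_im, Complex.mul_re,
      Complex.mul_im, Complex.I_re, Complex.I_im, Complex.one_re, Complex.one_im,
      Complex.ofReal_re, Complex.ofReal_im]
    ring
  have ha2 : Complex.normSq a₀ < 1 := by
    have h := Complex.sq_norm a₀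
    nlinarith [norm_nonneg a₀]
  have hpos : 0 < Complex.normSq (1 - Complex.I * s * t * (1 - a₀)) := by
    have := Complex.normSq_nonneg (a₀ - Complex.I * s * t * (1 - a₀))
    linarith
  have hne : 1 - Complex.I * s * t * (1 - a₀) ≠ 0 := by
    intro h
    rw [h] at hpos
    simp at hpos
  refine ⟨hne, ?_⟩
  rw [norm_div, div_lt_one (by rwa [norm_pos_iff])]
  have h1 : ‖a₀ - Complex.I * s * t * (1 - a₀)‖ ^ 2
      < ‖1 - Complex.I * s * t * (1 - a₀)‖ ^ 2 := by
    rw [Complex.sq_norm, Complex.sq_norm, key]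
    linarith
  nlinarith [norm_nonneg (a₀ - Complex.I * s * t * (1 - a₀)),
    norm_nonneg (1 - Complex.I * s * t * (1 - a₀))]
end

section
/- Let F(z₁,…,z_m) = P(z₁,…,z_m) · exp(R(z₁,…,z_m)) and G = P' · exp(R') where P, P' are nonzero complex multivariate polynomials and R, R' are complex multivariate polynomials of degree at most 2. If F(z) = G(z) for all z ∈ ℂ^m, then P = P' up to a nonzero multiplicative constant κ, and exp(R) = κ⁻¹·exp(R') pointwise; in particular deg P = deg P'. -/
open MvPolynomial

/-- If a polynomial `s` equals `p * exp q` pointwise, with `p ≠ 0`, then `q` has zero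
derivative (hence is constant). -/
lemma stellar_oneVar (p q s : Polynomial ℂ) (hp : p ≠ 0)
    (h : ∀ t : ℂ, Polynomial.eval t s = Polynomial.eval t p * Complex.exp (Polynomial.eval t q)) :
    q.derivative = 0 := by
  classical
  have hs : s ≠ 0 := by
    obtain ⟨t, ht⟩ : ∃ t, Polynomial.eval t p ≠ 0 := by
      by_contra hc; push_neg at hc
      exact hp (Polynomial.funext (fun t => by simpa using hc t))
    intro hs0
    have := h t
    rw [hs0, Polynomial.eval_zero] at this
    exact (mul_ne_zero ht (Complex.exp_ne_zero _)) this.symm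
  -- pointwise derivative identity
  have key : ∀ t : ℂ, Polynomial.eval t s.derivative * Polynomial.eval t p
      = Polynomial.eval t ((p.derivative + p * q.derivative) * s) := by
    intro t
    have h1 : HasDerivAt (fun t => Polynomial.eval t p * Complex.exp (Polynomial.eval t q))
        (Polynomial.eval t p.derivative * Complex.exp (Polynomial.eval t q)
          + Polynomial.eval t p
            * (Complex.exp (Polynomial.eval t q) * Polynomial.eval t q.derivative)) t :=
      (p.hasDerivAt t).mul ((q.hasDerivAt t).cexp)
    have h2 : HasDerivAt (fun t => Polynomial.eval t p * Complex.exp (Polynomial.eval t q))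
        (Polynomial.eval t s.derivative) t := by
      have : (fun t => Polynomial.eval t p * Complex.exp (Polynomial.eval t q))
          = fun t => Polynomial.eval t s := by
        funext u; exact (h u).symm
      rw [this]
      exact s.hasDerivAt t
    have h3 := h2.unique h1
    have h4 := h t
    simp only [Polynomial.eval_mul, Polynomial.eval_add]
    rw [h3, h4]
    ring
  have hpoly : s.derivative * p = (p.derivative + p * q.derivative) * s :=
    Polynomial.funext (fun t => by
      simpa [Polynomial.eval_mul] using key t)
  by_contra hq
  -- degrees
  have hlt : p.derivative.degree < (p * q.derivative).degree := by
    rw [Polynomial.degree_mul]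
    calc p.derivative.degree < p.degree := Polynomial.degree_derivative_lt hp
      _ ≤ p.degree + q.derivative.degree := by
          rw [Polynomial.degree_eq_natDegree hp, Polynomial.degree_eq_natDegree hq]
          exact_mod_cast le_self_add
  have hdeg : (p.derivative + p * q.derivative).degree = (p * q.derivative).degree :=
    Polynomial.degree_add_eq_right_of_degree_lt hlt
  have hne : (p.derivative + p * q.derivative) ≠ 0 := by
    intro h0
    have h1 : p * q.derivative = -p.derivative := by
      rw [eq_neg_iff_add_eq_zero, add_comm]; exact h0
    have h2 := congrArg Polynomial.degree h1
    rw [Polynomial.degree_neg] at h2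
    exact hlt.ne' h2
  have hsd : s.derivative ≠ 0 := by
    intro h0
    rw [h0, zero_mul] at hpoly
    exact (mul_ne_zero hne hs) hpoly.symm
  have hns : s.natDegree ≠ 0 := by
    intro h0
    apply hsd
    rw [Polynomial.eq_C_of_natDegree_eq_zero h0]
    simp
  have hlt2 : s.derivative.natDegree < s.natDegree := Polynomial.natDegree_derivative_lt hns
  have hnd := congrArg Polynomial.natDegree hpoly
  rw [Polynomial.natDegree_mul hsd hp, Polynomial.natDegree_mul hne hs,
    Polynomial.natDegree_eq_of_degree_eq hdeg, Polynomial.natDegree_mul hp hq] at hnd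
  omega

/-- Evaluating a polynomial obtained by substituting one-variable polynomials into a
multivariate polynomial. -/
lemma stellar_eval_aeval {m : ℕ} (F : MvPolynomial (Fin m) ℂ)
    (φ : Fin m → Polynomial ℂ) (t : ℂ) :
    Polynomial.eval t (MvPolynomial.aeval φ F)
      = MvPolynomial.eval (fun i => Polynomial.eval t (φ i)) F := by
  induction F using MvPolynomial.induction_on with
  | C a => simp
  | add f g hf hg => simp [hf, hg]
  | mul_X f i hf => simp [hf]

/-- Uniqueness of the `P × Gaussian` decomposition of a stellar function: two such
decompositions of the same entire function agree up to a nonzero constant, and in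
particular the polynomial parts have the same degree (the stellar rank is well defined). -/
theorem stellar_decomposition_unique (m : ℕ)
    (P P' R R' : MvPolynomial (Fin m) ℂ)
    (hP : P ≠ 0) (hP' : P' ≠ 0)
    (hR : R.totalDegree ≤ 2) (hR' : R'.totalDegree ≤ 2)
    (heq : ∀ z : Fin m → ℂ,
      eval z P * Complex.exp (eval z R) = eval z P' * Complex.exp (eval z R')) :
    ∃ κ : ℂ, κ ≠ 0 ∧ P = κ • P' ∧
      (∀ z : Fin m → ℂ, Complex.exp (eval z R) = κ⁻¹ * Complex.exp (eval z R')) ∧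
      P.totalDegree = P'.totalDegree := by
  classical
  set Q : MvPolynomial (Fin m) ℂ := R - R' with hQ
  have hQeval : ∀ z, eval z Q = eval z R - eval z R' := by
    intro z; simp [hQ]
  have heq' : ∀ z : Fin m → ℂ, eval z P' = eval z P * Complex.exp (eval z Q) := by
    intro z
    rw [hQeval, Complex.exp_sub, ← mul_div_assoc, eq_div_iff (Complex.exp_ne_zero _)]
    linear_combination -(heq z)
  -- find a point where P doesn't vanish
  obtain ⟨y, hy⟩ : ∃ y : Fin m → ℂ, eval y P ≠ 0 := by
    by_contra hcon
    push_neg at hcon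
    exact hP (MvPolynomial.funext (fun x => by simpa using hcon x))
  -- Q is constant
  have hconst : ∀ a : Fin m → ℂ, eval a Q = eval y Q := by
    intro a
    set φ : Fin m → Polynomial ℂ :=
      fun i => Polynomial.C (a i) + Polynomial.X * Polynomial.C (y i - a i) with hφ
    have hφ0 : ∀ i, Polynomial.eval 0 (φ i) = a i := by intro i; simp [hφ]
    have hφ1 : ∀ i, Polynomial.eval 1 (φ i) = y i := by intro i; simp [hφ]
    set p := MvPolynomial.aeval φ P with hp
    set q := MvPolynomial.aeval φ Q with hq
    set s := MvPolynomial.aeval φ P' with hsdef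
    have hpne : p ≠ 0 := by
      intro h0
      apply hy
      have h1 := stellar_eval_aeval P φ 1
      rw [← hp, h0, Polynomial.eval_zero] at h1
      have h2 : (fun i => Polynomial.eval 1 (φ i)) = y := funext hφ1
      rw [h2] at h1
      exact h1.symm
    have hline : ∀ t : ℂ, Polynomial.eval t s
        = Polynomial.eval t p * Complex.exp (Polynomial.eval t q) := by
      intro t
      rw [hp, hq, hsdef, stellar_eval_aeval, stellar_eval_aeval, stellar_eval_aeval]
      exact heq' _
    have hqd : q.derivative = 0 := stellar_oneVar p q s hpne hline
    have hqc : ∀ t : ℂ, Polynomial.eval t q = Polynomial.eval 0 q := by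
      intro t
      have hc := Polynomial.eq_C_of_natDegree_eq_zero
        (Polynomial.natDegree_eq_zero_of_derivative_eq_zero hqd)
      rw [hc]; simp
    have h0 := stellar_eval_aeval Q φ 0
    have h1 := stellar_eval_aeval Q φ 1
    rw [← hq] at h0 h1
    have e0 : eval a Q = Polynomial.eval 0 q := by
      rw [h0, funext hφ0]
    have e1 : eval y Q = Polynomial.eval 1 q := by
      rw [h1, funext hφ1]
    rw [e0, e1, hqc 1]
  set C := eval y Q with hC
  have hsm : P = Complex.exp (-C) • P' := by
    apply MvPolynomial.funext
    intro x
    have hx := heq' x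
    rw [hconst x] at hx
    rw [MvPolynomial.smul_eval, hx, Complex.exp_neg]
    field_simp [Complex.exp_ne_zero]
  refine ⟨Complex.exp (-C), Complex.exp_ne_zero _, hsm, ?_, ?_⟩
  · intro z
    have hz : eval z R = eval z Q + eval z R' := by rw [hQeval]; ring
    rw [hz, Complex.exp_add, hconst z, Complex.exp_neg, inv_inv]
  · have h2 : P' = Complex.exp C • P := by
      rw [hsm, smul_smul, ← Complex.exp_add]
      simp
    refine le_antisymm ?_ ?_
    · conv_lhs => rw [hsm]
      exact MvPolynomial.totalDegree_smul_le _ _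
    · conv_lhs => rw [h2]
      exact MvPolynomial.totalDegree_smul_le _ _
end
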